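/- For every real parameter c < −3, every periodic point of f_c is real: if z ∈ ℂ satisfies f_c^{∘n}(z) = z for some n ≥ 1, then z ∈ ℝ. Consequently, every multiplier (f_c^{∘n})'(z) of a periodic orbit of f_c is real. -/

import Mathlib

open Complex Set Filter Topology

noncomputable section

/-- The quadratic polynomial `f_c(z) = z² + c`. -/
def fc (c z : ℂ) : ℂ := z ^ 2 + c

/-- The `n`-th iterate of `f_c`. -/
def fIter (c : ℂ) (n : ℕ) : ℂ → ℂ := (fc c)^[n]

/-- The multiplier: the derivative of the `n`-th iterate of `f_c` at `z`. -/
def multiplier (c : ℂ) (n : ℕ) (z : ℂ) : ℂ := deriv (fIter c n) z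

/-- `z` is a periodic point of exact period `n ≥ 1` of `f_c`. -/
def ExactPeriodic (c : ℂ) (n : ℕ) (z : ℂ) : Prop :=
  1 ≤ n ∧ fIter c n z = z ∧ ∀ m, 1 ≤ m → m < n → fIter c m z ≠ z

/-- The forward orbit of `z` under `f_c`. -/
def orbitOf (c z : ℂ) : Set ℂ := Set.range fun k => fIter c k z

/-- `ρ` is a local multiplier function on `U` of the periodic orbit of the periodic
point `z₀` (of exact period `n`) of `f_{c₀}`. -/
def IsLocalMultiplier (c₀ : ℂ) (n : ℕ) (z₀ : ℂ) (U : Set ℂ) (ρ : ℂ → ℂ) : Prop :=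
  IsOpen U ∧ IsConnected U ∧ c₀ ∈ U ∧
    ∃ p : ℂ → ℂ, AnalyticOnNhd ℂ p U ∧ p c₀ ∈ orbitOf c₀ z₀ ∧
      (∀ c ∈ U, ExactPeriodic c n (p c)) ∧ ∀ c ∈ U, ρ c = multiplier c n (p c)

/-- `ν` is a ν-function on `U` of the periodic orbit of `z₀`. -/
def IsNuFunction (c₀ : ℂ) (n : ℕ) (z₀ : ℂ) (U : Set ℂ) (ν : ℂ → ℂ) : Prop :=
  ∃ ρ : ℂ → ℂ, IsLocalMultiplier c₀ n z₀ U ρ ∧ (∀ c ∈ U, ρ c ≠ 0) ∧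
    ∀ c ∈ U, ν c = deriv ρ c / (n * ρ c)

/-- `X_n`: the set of critical points of period-`n` multipliers. -/
def Xn (n : ℕ) : Set ℂ :=
  {c₀ | ∃ (z₀ : ℂ) (U : Set ℂ) (ρ : ℂ → ℂ),
    ExactPeriodic c₀ n z₀ ∧ IsLocalMultiplier c₀ n z₀ U ρ ∧ deriv ρ c₀ = 0}

/-- The accumulation set `X` of critical points of multipliers. -/
def Xacc : Set ℂ :=
  ⋂ k ∈ {k : ℕ | 1 ≤ k}, closure (⋃ n ∈ {n : ℕ | k ≤ n}, Xn n)

/-- The Mandelbrot set. -/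
def Mset : Set ℂ := {c | Bornology.IsBounded (Set.range fun n => fIter c n 0)}

/-- The set `Y_c`. -/
def Yset (c : ℂ) : Set ℂ :=
  closure {w | ∃ (n : ℕ) (z : ℂ) (U : Set ℂ) (ν : ℂ → ℂ),
    ExactPeriodic c n z ∧ 1 < ‖multiplier c n z‖ ∧
    IsNuFunction c n z U ν ∧ ν c = w}

/-- The filled Julia set of `f_c`. -/
def filledJulia (c : ℂ) : Set ℂ :=
  {z | Bornology.IsBounded (Set.range fun n => fIter c n z)}

/-- The Julia set of `f_c`. -/
def juliaSet (c : ℂ) : Set ℂ := frontier (filledJulia c)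

lemma fc_diff (c : ℂ) : Differentiable ℂ (fc c) := by
  unfold fc; exact (differentiable_pow 2).add_const c

lemma fc_iter_diff (c : ℂ) (k : ℕ) : Differentiable ℂ ((fc c)^[k]) := by
  induction k with
  | zero => simpa using differentiable_id
  | succ k ih => rw [Function.iterate_succ']; exact (fc_diff c).comp ih

lemma deriv_fc (c w : ℂ) : deriv (fc c) w = 2 * w := by
  unfold fc
  rw [deriv_add_const]
  simp [deriv_pow]

lemma fc_im_zero (c : ℝ) (k : ℕ) (z : ℂ) (h : z.im = 0) :
    ((fc (c:ℂ))^[k] z).im = 0 := by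
  induction k with
  | zero => simpa
  | succ k ih =>
    rw [Function.iterate_succ_apply']
    simp [fc, pow_two, Complex.mul_im, Complex.add_im, ih]

lemma deriv_iter_real (c : ℝ) (n : ℕ) (z : ℂ) (h : z.im = 0) :
    (deriv ((fc (c:ℂ))^[n]) z).im = 0 := by
  induction n with
  | zero => simp
  | succ k ih =>
    rw [Function.iterate_succ']
    rw [deriv_comp _ ((fc_diff _).differentiableAt) ((fc_iter_diff _ k).differentiableAt)]
    rw [deriv_fc]
    simp [Complex.mul_im, fc_im_zero c k z h, ih]

/-- For a real parameter `c < -3`, every periodic point of `f_c` is real, and hence every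
multiplier of a periodic orbit of `f_c` is real. -/
theorem stmt17 (c : ℝ) (hc : c < -3) (n : ℕ) (hn : 1 ≤ n) (z : ℂ)
    (hz : fIter (c : ℂ) n z = z) :
    z.im = 0 ∧ (deriv (fIter (c : ℂ) n) z).im = 0 := by
  have him : z.im = 0 := by
    by_contra hy
    set w : ℕ → ℂ := fun k => (fc (c:ℂ))^[k] z with hw
    have hstep : ∀ k, w (k+1) = (w k)^2 + (c:ℂ) := by
      intro k
      simp only [hw, Function.iterate_succ_apply']
      rfl
    have hper : w n = w 0 := by simpa [hw, fIter] using hz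
    have hne : (Finset.range n).Nonempty := ⟨0, Finset.mem_range.mpr hn⟩
    set M := (Finset.range n).sup' hne (fun k => ‖w k‖) with hMdef
    have hMb : ∀ k ≤ n, ‖w k‖ ≤ M := by
      intro k hk
      rcases eq_or_lt_of_le hk with rfl | hk'
      · rw [hper]; exact Finset.le_sup' (fun k => ‖w k‖) (Finset.mem_range.mpr hn)
      · exact Finset.le_sup' (fun k => ‖w k‖) (Finset.mem_range.mpr hk')
    have hM0 : 0 ≤ M := le_trans (norm_nonneg _) (hMb 0 (Nat.zero_le n))
    obtain ⟨k₀, hk₀, hMk⟩ := Finset.exists_mem_eq_sup' hne (fun k => ‖w k‖)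
    have hk₀n : k₀ < n := Finset.mem_range.mp hk₀
    have h1 : ‖w (k₀+1)‖ ≤ M := hMb _ (Nat.succ_le_of_lt hk₀n)
    have h2 : M^2 + c ≤ ‖w (k₀+1)‖ := by
      have h3 := norm_sub_norm_le ((w k₀)^2) (-(c:ℂ))
      rw [sub_neg_eq_add] at h3
      have h4 : ‖(w k₀)^2‖ = M^2 := by
        rw [norm_pow, ← hMk]
      have h5 : ‖(-(c:ℂ))‖ = -c := by
        rw [norm_neg, Complex.norm_real, Real.norm_eq_abs, abs_of_neg (by linarith)]
      rw [h4, h5, ← hstep] at h3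
      linarith
    have hquad : M^2 - M + c ≤ 0 := by linarith
    have hMlt : M + c + 1/4 < 0 := by nlinarith [sq_nonneg (M + c + 1/4), sq_nonneg (c+3)]
    have hkey : ∀ k < n, (w k).im^2 + (-c - M) ≤ (w k).re^2 := by
      intro k hk
      have hb := hMb (k+1) (Nat.succ_le_of_lt hk)
      have h4 := Complex.abs_re_le_norm (w (k+1))
      have h3 : -M ≤ (w (k+1)).re := by
        have := neg_abs_le (w (k+1)).re
        linarith [le_trans h4 hb]
      have h5 : (w (k+1)).re = (w k).re^2 - (w k).im^2 + c := by
        rw [hstep]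
        simp [pow_two, Complex.add_re, Complex.mul_re, Complex.ofReal_re]
      linarith
    set r := 4 * (-c - M) with hrdef
    have hr : 1 < r := by simp only [hrdef]; linarith
    have hgrow : ∀ k ≤ n, r^k * z.im^2 ≤ (w k).im^2 := by
      intro k
      induction k with
      | zero => intro _; simp [hw]
      | succ k ih =>
        intro hk
        have hk' : k < n := hk
        have ih' := ih (le_of_lt hk')
        have him2 : (w (k+1)).im = 2 * (w k).re * (w k).im := by
          rw [hstep]
          simp [pow_two, Complex.add_im, Complex.mul_im]
          ring
        have hkey' := hkey k hk'
        rw [him2]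
        have h6 : r * (w k).im^2 ≤ (2 * (w k).re * (w k).im)^2 := by
          nlinarith [sq_nonneg ((w k).im), sq_nonneg ((w k).im^2),
            mul_nonneg (sq_nonneg ((w k).im)) (sub_nonneg.mpr hkey')]
        calc r^(k+1) * z.im^2 = r * (r^k * z.im^2) := by ring
          _ ≤ r * (w k).im^2 := by
              exact mul_le_mul_of_nonneg_left ih' (by linarith)
          _ ≤ _ := h6
    have hfin := hgrow n le_rfl
    rw [hper] at hfin
    have hw0 : (w 0).im = z.im := by simp [hw]
    rw [hw0] at hfin
    have him2 : 0 < z.im^2 := by positivity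
    have hrn : r ≤ r^n := le_self_pow₀ (le_of_lt hr) (by omega)
    nlinarith
  refine ⟨him, ?_⟩
  have := deriv_iter_real c n z him
  simpa [fIter] using this
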